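/- Let G=(V,E) be a finite loopless multigraph and let U₁, U₂ ⊆ V. Then |E⁺(U₁)| + |E⁺(U₂)| ≥ |E⁺(U₁∖U₂)| + |E⁺(U₂∖U₁)| + 2|E(U₁∩U₂)| + |F(U₁∩U₂)|. -/
import Mathlib


open Finset

variable {V E : Type} [Fintype V] [DecidableEq V] [Fintype E]

/-- A multigraph given by an incidence map `ends : E → Sym2 V` is loopless if no edge is a loop. -/
def Loopless (ends : E → Sym2 V) : Prop := ∀ e : E, ¬ (ends e).IsDiag

/-- The degree of a vertex: the number of edges incident with it. -/
def mDegree (ends : E → Sym2 V) (v : V) : ℕ :=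
  (univ.filter fun e => v ∈ ends e).card

/-- The minimum degree δ(G). -/
noncomputable def minDegree (ends : E → Sym2 V) : ℕ :=
  sInf (Set.range (mDegree ends))

/-- The maximum degree Δ(G). -/
noncomputable def maxDegree (ends : E → Sym2 V) : ℕ :=
  sSup (Set.range (mDegree ends))

/-- The maximum multiplicity μ(G) of an edge. -/
noncomputable def maxMultiplicity (ends : E → Sym2 V) : ℕ :=
  sSup (Set.range fun e : E => (univ.filter fun f : E => ends f = ends e).card)

/-- `E(U)`: the set of edges with both ends in `U`. -/
def edgesIn (ends : E → Sym2 V) (U : Finset V) : Finset E :=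
  univ.filter fun e => ∀ v ∈ ends e, v ∈ U

/-- `E⁺(U)`: the set of edges with at least one end in `U`. -/
def edgesPlus (ends : E → Sym2 V) (U : Finset V) : Finset E :=
  univ.filter fun e => ∃ v ∈ ends e, v ∈ U

/-- `F(U)`: the set of edges with exactly one end in `U`. -/
def edgesF (ends : E → Sym2 V) (U : Finset V) : Finset E :=
  univ.filter fun e => (∃ v ∈ ends e, v ∈ U) ∧ ¬ ∀ v ∈ ends e, v ∈ U

/-- `E(X,Y)`: the set of edges with one end in `X` and the other end in `Y`. -/
def edgesBetween (ends : E → Sym2 V) (X Y : Finset V) : Finset E :=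
  univ.filter fun e => ∃ x ∈ X, ∃ y ∈ Y, ends e = s(x, y)

/-- An odd set: a vertex set of odd size at least 3. -/
def IsOddSet (U : Finset V) : Prop := 3 ≤ U.card ∧ Odd U.card

/-- A proper edge coloring: each vertex is incident with at most one edge of each color. -/
def IsProperEdgeColoring (ends : E → Sym2 V) {k : ℕ} (c : E → Fin k) : Prop :=
  ∀ v : V, ∀ e f : E, v ∈ ends e → v ∈ ends f → c e = c f → e = f

/-- The chromatic index χ'(G). -/
noncomputable def chromaticIndex (ends : E → Sym2 V) : ℕ :=
  sInf {k : ℕ | ∃ c : E → Fin k, IsProperEdgeColoring ends c}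

/-- A cover coloring: each vertex is incident with at least one edge of each color. -/
def IsCoverColoring (ends : E → Sym2 V) {k : ℕ} (c : E → Fin k) : Prop :=
  ∀ (v : V) (i : Fin k), ∃ e : E, v ∈ ends e ∧ c e = i

/-- The cover index ξ(G). -/
noncomputable def coverIndex (ends : E → Sym2 V) : ℕ :=
  sSup {k : ℕ | ∃ c : E → Fin k, IsCoverColoring ends c}

/-- The density Γ(G) = max over odd sets U of 2|E(U)|/(|U|-1). -/
noncomputable def density (ends : E → Sym2 V) : ℝ :=
  sSup {x : ℝ | ∃ U : Finset V, IsOddSet U ∧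
    x = 2 * (edgesIn ends U).card / ((U.card : ℝ) - 1)}

/-- The co-density Φ(G) = min over odd sets U of 2|E⁺(U)|/(|U|+1). -/
noncomputable def codensity (ends : E → Sym2 V) : ℝ :=
  sInf {x : ℝ | ∃ U : Finset V, IsOddSet U ∧
    x = 2 * (edgesPlus ends U).card / ((U.card : ℝ) + 1)}

/-- For any `U₁, U₂ ⊆ V`,
`|E⁺(U₁)| + |E⁺(U₂)| ≥ |E⁺(U₁∖U₂)| + |E⁺(U₂∖U₁)| + 2|E(U₁∩U₂)| + |F(U₁∩U₂)|`. -/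
theorem stmt_10
    {V E : Type} [Fintype V] [DecidableEq V] [Fintype E]
    (ends : E → Sym2 V) (hG : Loopless ends) (U₁ U₂ : Finset V) :
    (edgesPlus ends (U₁ \ U₂)).card + (edgesPlus ends (U₂ \ U₁)).card +
        2 * (edgesIn ends (U₁ ∩ U₂)).card + (edgesF ends (U₁ ∩ U₂)).card ≤
      (edgesPlus ends U₁).card + (edgesPlus ends U₂).card := by
  classical
  simp only [edgesPlus, edgesIn, edgesF, Finset.card_filter, Finset.mul_sum,
    ← Finset.sum_add_distrib]
  apply Finset.sum_le_sum
  intro e _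
  have hne : ¬ (ends e).IsDiag := hG e
  obtain ⟨⟨a, b⟩, h⟩ := Quot.exists_rep (ends e)
  have h' : ends e = s(a, b) := h.symm
  rw [h'] at hne ⊢
  have hab : a ≠ b := by simpa [Sym2.isDiag_iff_proj_eq] using hne
  simp only [Sym2.mem_iff, Finset.mem_sdiff, Finset.mem_inter]
  by_cases h1 : a ∈ U₁ <;> by_cases h2 : a ∈ U₂ <;> by_cases h3 : b ∈ U₁ <;>
    by_cases h4 : b ∈ U₂ <;> simp [h1, h2, h3, h4, hab]
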